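/- arXiv:2101.03773 — 2 statements merged into one kernel-verified Lean document; each statement's English description precedes it below -/
import Mathlib

section
/- For every t > 0 and y > 0, and exponents p, q > 1 with 1/p + 1/q = 1 and q < 2 < p, the integral ∫_0^∞ e^{-t v²} v^{1/p − 1/2} |v − y|^{1/q − 1} dv is bounded by C t^{-1/4} with C independent of t and y. -/
open MeasureTheory Real

open Set


lemma my_measurable_rpow_const (c : ℝ) : Measurable fun x : ℝ => x ^ c :=
  measurable_of_continuousOn_compl_singleton 0 fun x hx =>
    (Real.continuousAt_rpow_const x c (Or.inl hx)).continuousWithinAt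

lemma my_ii_pos {c : ℝ} (hc : -1 < c) {r : ℝ} (hr : 0 ≤ r) :
    IntervalIntegrable (fun x : ℝ => |x| ^ c) volume 0 r := by
  rw [intervalIntegrable_iff, uIoc_of_le hr]
  have h0 : IntegrableOn (fun x : ℝ => x ^ c) (Ioc 0 r) volume := by
    have := intervalIntegral.intervalIntegrable_rpow' (a := 0) (b := r) hc
    rwa [intervalIntegrable_iff, uIoc_of_le hr] at this
  exact h0.congr_fun (fun x hx => by rw [abs_of_pos hx.1]) measurableSet_Ioc

lemma my_ii_neg {c : ℝ} (hc : -1 < c) {r : ℝ} (hr : 0 ≤ r) :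
    IntervalIntegrable (fun x : ℝ => |x| ^ c) volume (-r) 0 := by
  have h2 := (IntervalIntegrable.iff_comp_neg (by simp)).mp (my_ii_pos hc hr)
  simp only [abs_neg, neg_zero] at h2
  exact h2.symm

lemma my_abs_rpow_ii {c : ℝ} (hc : -1 < c) {r : ℝ} (hr : 0 ≤ r) :
    IntervalIntegrable (fun x : ℝ => |x| ^ c) volume (-r) r :=
  (my_ii_neg hc hr).trans (my_ii_pos hc hr)

lemma my_abs_rpow_int {c : ℝ} (hc : -1 < c) {r : ℝ} (hr : 0 ≤ r) :
    ∫ x in (-r)..r, |x| ^ c = 2 * r ^ (c + 1) / (c + 1) := by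
  have hI0 : (∫ x in (0:ℝ)..r, |x| ^ c) = r ^ (c + 1) / (c + 1) := by
    rw [intervalIntegral.integral_congr (g := fun x : ℝ => x ^ c) ?_,
      integral_rpow (Or.inl hc)]
    · rw [Real.zero_rpow (by linarith : c + 1 ≠ 0)]; ring
    · intro x hx
      rw [uIcc_of_le hr] at hx
      simp [abs_of_nonneg hx.1]
  have hneg : (∫ x in (-r)..(0:ℝ), |x| ^ c) = ∫ x in (0:ℝ)..r, |x| ^ c := by
    have := intervalIntegral.integral_comp_neg (a := (0:ℝ)) (b := r) (fun x : ℝ => |x| ^ c)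
    simp only [abs_neg, neg_zero] at this
    exact this.symm
  rw [← intervalIntegral.integral_add_adjacent_intervals (my_ii_neg hc hr) (my_ii_pos hc hr),
    hneg, hI0]
  ring

lemma my_trans_ii {c : ℝ} (hc : -1 < c) {r : ℝ} (hr : 0 ≤ r) (y : ℝ) :
    IntegrableOn (fun v : ℝ => |v - y| ^ c) (Ioc (y - r) (y + r)) volume := by
  have h := (my_abs_rpow_ii hc hr).comp_sub_right y
  rw [intervalIntegrable_iff, uIoc_of_le (by linarith)] at h
  have : -r + y = y - r := by ring
  rw [this] at h
  have : r + y = y + r := by ring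
  rwa [this] at h

lemma my_trans_int {c : ℝ} (hc : -1 < c) {r : ℝ} (hr : 0 ≤ r) (y : ℝ) :
    ∫ v in Ioc (y - r) (y + r), |v - y| ^ c = 2 * r ^ (c + 1) / (c + 1) := by
  rw [← intervalIntegral.integral_of_le (by linarith : y - r ≤ y + r),
    intervalIntegral.integral_comp_sub_right (fun x : ℝ => |x| ^ c) y]
  have e1 : y - r - y = -r := by ring
  have e2 : y + r - y = r := by ring
  rw [e1, e2, my_abs_rpow_int hc hr]

lemma my_pointwise {t c y r : ℝ} (ht : 0 ≤ t) (hc0 : c ≤ 0) (hr : 0 < r) (v : ℝ) :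
    Real.exp (-t * v ^ 2) * |v - y| ^ c ≤
      (Ioc (y - r) (y + r)).indicator (fun v => |v - y| ^ c) v
        + r ^ c * Real.exp (-t * v ^ 2) := by
  have hexp : (0:ℝ) < Real.exp (-t * v ^ 2) := Real.exp_pos _
  have hrc : (0:ℝ) ≤ r ^ c := Real.rpow_nonneg hr.le _
  by_cases h : v ∈ Ioc (y - r) (y + r)
  · rw [Set.indicator_of_mem h]
    have h1 : Real.exp (-t * v ^ 2) ≤ 1 :=
      Real.exp_le_one_iff.mpr (by nlinarith [sq_nonneg v])
    have h2 : Real.exp (-t * v ^ 2) * |v - y| ^ c ≤ |v - y| ^ c :=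
      mul_le_of_le_one_left (Real.rpow_nonneg (abs_nonneg _) _) h1
    exact h2.trans (le_add_of_nonneg_right (by positivity))
  · rw [Set.indicator_of_notMem h]
    simp only [Set.mem_Ioc, not_and, not_le] at h
    have hge : r ≤ |v - y| := by
      rcases lt_or_ge (y - r) v with h1 | h1
      · exact le_abs.mpr (Or.inl (by linarith [h h1]))
      · exact le_abs.mpr (Or.inr (by linarith))
    have h2 : |v - y| ^ c ≤ r ^ c := Real.rpow_le_rpow_of_nonpos hr hge hc0
    calc Real.exp (-t * v ^ 2) * |v - y| ^ c
        ≤ Real.exp (-t * v ^ 2) * r ^ c :=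
          mul_le_mul_of_nonneg_left h2 hexp.le
      _ = r ^ c * Real.exp (-t * v ^ 2) := mul_comm _ _
      _ ≤ _ := le_add_of_nonneg_left le_rfl

lemma my_meas {t c y : ℝ} :
    Measurable fun v : ℝ => Real.exp (-t * v ^ 2) * |v - y| ^ c := by
  apply Measurable.mul
  · exact Real.measurable_exp.comp ((measurable_id.pow_const 2).const_mul (-t))
  · exact (my_measurable_rpow_const c).comp ((measurable_id.sub_const y).abs)

lemma my_g_integrable {t c y r : ℝ} (ht : 0 < t) (hc1 : -1 < c) (hr : 0 ≤ r) :
    Integrable (fun v : ℝ => (Ioc (y - r) (y + r)).indicator (fun v => |v - y| ^ c) v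
      + r ^ c * Real.exp (-t * v ^ 2)) volume := by
  exact ((my_trans_ii hc1 hr y).integrable_indicator measurableSet_Ioc).add
    ((integrable_exp_neg_mul_sq ht).const_mul _)

lemma my_key_integrable {t c : ℝ} (ht : 0 < t) (hc1 : -1 < c) (hc0 : c ≤ 0) (y : ℝ) :
    Integrable (fun v : ℝ => Real.exp (-t * v ^ 2) * |v - y| ^ c) volume := by
  apply Integrable.mono (my_g_integrable ht hc1 zero_le_one (y := y))
    my_meas.aestronglyMeasurable
  filter_upwards with v
  have h1 := my_pointwise (y := y) ht.le hc0 one_pos v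
  have h2 : (0:ℝ) ≤ Real.exp (-t * v ^ 2) * |v - y| ^ c := by positivity
  have h3 : (0:ℝ) ≤ (Ioc (y - 1) (y + 1)).indicator (fun v => |v - y| ^ c) v
      + (1:ℝ) ^ c * Real.exp (-t * v ^ 2) := by
    apply add_nonneg _ (by positivity)
    exact Set.indicator_nonneg (fun x _ => Real.rpow_nonneg (abs_nonneg _) _) v
  rw [Real.norm_of_nonneg h2, Real.norm_of_nonneg h3]
  exact h1

lemma my_key_bound {c : ℝ} (hc1 : -1 < c) (hc0 : c ≤ 0) {t : ℝ} (ht : 0 < t) (y : ℝ) :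
    ∫ v in Ioi (0:ℝ), Real.exp (-t * v ^ 2) * |v - y| ^ c ≤
      (2 / (c + 1) + Real.sqrt π) * t ^ (-(c + 1) / 2) := by
  set r : ℝ := t ^ (-(2:ℝ)⁻¹) with hr_def
  have hr : 0 < r := Real.rpow_pos_of_pos ht _
  set g : ℝ → ℝ := fun v => (Ioc (y - r) (y + r)).indicator (fun v => |v - y| ^ c) v
      + r ^ c * Real.exp (-t * v ^ 2) with hg_def
  have hgint : Integrable g volume := my_g_integrable ht hc1 hr.le
  have hgnn : ∀ v, 0 ≤ g v := fun v => add_nonneg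
    (Set.indicator_nonneg (fun x _ => Real.rpow_nonneg (abs_nonneg _) _) v) (by positivity)
  have step1 : (∫ v in Ioi (0:ℝ), Real.exp (-t * v ^ 2) * |v - y| ^ c) ≤ ∫ v in Ioi (0:ℝ), g v :=
    integral_mono_of_nonneg (ae_of_all _ fun v => by positivity) hgint.integrableOn
      (ae_of_all _ fun v => my_pointwise ht.le hc0 hr v)
  have step2 : (∫ v in Ioi (0:ℝ), g v) ≤ ∫ v, g v :=
    setIntegral_le_integral hgint (ae_of_all _ hgnn)
  have step3 : (∫ v, g v) = 2 * r ^ (c + 1) / (c + 1) + r ^ c * Real.sqrt (π / t) := by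
    rw [hg_def, integral_add ((my_trans_ii hc1 hr.le y).integrable_indicator measurableSet_Ioc)
      ((integrable_exp_neg_mul_sq ht).const_mul _),
      integral_indicator measurableSet_Ioc, my_trans_int hc1 hr.le y,
      integral_const_mul, integral_gaussian]
  have e1 : r ^ (c + 1) = t ^ (-(c + 1) / 2) := by
    rw [hr_def, ← Real.rpow_mul ht.le]
    congr 1; ring
  have e2 : r ^ c * Real.sqrt (π / t) = Real.sqrt π * t ^ (-(c + 1) / 2) := by
    rw [Real.sqrt_div Real.pi_pos.le, Real.sqrt_eq_rpow t, hr_def,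
      ← Real.rpow_mul ht.le, div_eq_mul_inv, ← Real.rpow_neg ht.le,
      mul_left_comm, ← Real.rpow_add ht]
    congr 2; ring
  calc (∫ v in Ioi (0:ℝ), Real.exp (-t * v ^ 2) * |v - y| ^ c)
      ≤ ∫ v, g v := step1.trans step2
    _ = 2 * r ^ (c + 1) / (c + 1) + r ^ c * Real.sqrt (π / t) := step3
    _ = (2 / (c + 1) + Real.sqrt π) * t ^ (-(c + 1) / 2) := by rw [e1, e2]; ring

/-- For conjugate exponents `1 < q < 2 < p`, the singular Gaussian integral
`∫_0^∞ e^{-t v²} v^{1/p − 1/2} |v − y|^{1/q − 1} dv` is bounded by `C t^{-1/4}`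
uniformly in `t > 0` and `y > 0`. -/
theorem singular_gaussian_bound (p q : ℝ) (hq1 : 1 < q) (hq2 : q < 2) (hp : 2 < p)
    (hpq : 1 / p + 1 / q = 1) :
    ∃ C : ℝ, 0 < C ∧ ∀ t y : ℝ, 0 < t → 0 < y →
      (∫ v in Set.Ioi (0 : ℝ),
          Real.exp (-t * v ^ 2) * v ^ (1 / p - 1 / 2) * |v - y| ^ (1 / q - 1)) ≤
        C * t ^ (-(1 / 4 : ℝ)) := by
  have hp0 : (0:ℝ) < p := by linarith
  have hq0 : (0:ℝ) < q := by linarith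
  have h1p : 1 / p < 1 / 2 := one_div_lt_one_div_of_lt two_pos hp
  have h1p0 : 0 < 1 / p := by positivity
  have h1q : 1 / 2 < 1 / q := one_div_lt_one_div_of_lt hq0 hq2
  have h1q1 : 1 / q < 1 := by
    have := one_div_lt_one_div_of_lt one_pos hq1; simpa using this
  set aa : ℝ := 1 / p - 1 / 2 with haa
  set bb : ℝ := 1 / q - 1 with hbb
  have hab : aa + bb = -(1/2) := by rw [haa, hbb]; linarith
  have hc1a : -1 < 2 * aa := by rw [haa]; linarith
  have hc0a : 2 * aa < 0 := by rw [haa]; linarith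
  have hc1b : -1 < 2 * bb := by rw [hbb]; linarith
  have hc0b : 2 * bb < 0 := by rw [hbb]; linarith
  have hsp : 0 < Real.sqrt π := Real.sqrt_pos.mpr Real.pi_pos
  set C₁ : ℝ := 2 / (2 * aa + 1) + Real.sqrt π with hC₁
  set C₂ : ℝ := 2 / (2 * bb + 1) + Real.sqrt π with hC₂
  have hC₁0 : 0 < C₁ := by
    have : 0 < 2 / (2 * aa + 1) := div_pos two_pos (by linarith)
    rw [hC₁]; linarith
  have hC₂0 : 0 < C₂ := by
    have : 0 < 2 / (2 * bb + 1) := div_pos two_pos (by linarith)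
    rw [hC₂]; linarith
  refine ⟨(C₁ + C₂) / 2, half_pos (add_pos hC₁0 hC₂0), fun t y ht hy => ?_⟩
  set lam : ℝ := t ^ (aa + 1/4) with hlam
  have hlam0 : 0 < lam := Real.rpow_pos_of_pos ht _
  have hs : Real.sqrt lam ≠ 0 := (Real.sqrt_pos.mpr hlam0).ne'
  have h₁ : IntegrableOn (fun v : ℝ => Real.exp (-t * v ^ 2) * |v - 0| ^ (2 * aa))
      (Ioi (0:ℝ)) volume := (my_key_integrable ht hc1a hc0a.le 0).integrableOn
  have h₂ : IntegrableOn (fun v : ℝ => Real.exp (-t * v ^ 2) * |v - y| ^ (2 * bb))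
      (Ioi (0:ℝ)) volume := (my_key_integrable ht hc1b hc0b.le y).integrableOn
  set g : ℝ → ℝ := fun v => lam / 2 * (Real.exp (-t * v ^ 2) * |v - 0| ^ (2 * aa))
      + lam⁻¹ / 2 * (Real.exp (-t * v ^ 2) * |v - y| ^ (2 * bb)) with hg
  have hgint : IntegrableOn g (Ioi (0:ℝ)) volume :=
    (h₁.const_mul _).add (h₂.const_mul _)
  have hmono : ∀ v : ℝ, v ∈ Ioi (0:ℝ) →
      Real.exp (-t * v ^ 2) * v ^ aa * |v - y| ^ bb ≤ g v := by
    intro v hv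
    have hv0 : (0:ℝ) < v := hv
    have e0 : |v - 0| = v := by rw [sub_zero, abs_of_pos hv0]
    set X : ℝ := Real.sqrt lam * v ^ aa with hX
    set Z : ℝ := (Real.sqrt lam)⁻¹ * |v - y| ^ bb with hZ
    have hXZ : X * Z = v ^ aa * |v - y| ^ bb := by
      calc X * Z = (Real.sqrt lam * (Real.sqrt lam)⁻¹) * (v ^ aa * |v - y| ^ bb) := by
            rw [hX, hZ]; ring
        _ = v ^ aa * |v - y| ^ bb := by rw [mul_inv_cancel₀ hs, one_mul]
    have key2 : 2 * X * Z ≤ X ^ 2 + Z ^ 2 := two_mul_le_add_sq X Z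
    have hX2 : X ^ 2 = lam * v ^ (2 * aa) := by
      rw [hX, mul_pow, Real.sq_sqrt hlam0.le, pow_two,
        ← Real.rpow_add' hv0.le (by linarith : aa + aa ≠ 0)]
      congr 2; ring
    have hZ2 : Z ^ 2 = lam⁻¹ * |v - y| ^ (2 * bb) := by
      rw [hZ, mul_pow, inv_pow, Real.sq_sqrt hlam0.le, pow_two,
        ← Real.rpow_add' (abs_nonneg _) (by linarith : bb + bb ≠ 0)]
      congr 2; ring
    have hmid : v ^ aa * |v - y| ^ bb ≤
        (lam * v ^ (2 * aa) + lam⁻¹ * |v - y| ^ (2 * bb)) / 2 := by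
      rw [← hXZ, ← hX2, ← hZ2]; linarith
    calc Real.exp (-t * v ^ 2) * v ^ aa * |v - y| ^ bb
        = Real.exp (-t * v ^ 2) * (v ^ aa * |v - y| ^ bb) := by ring
      _ ≤ Real.exp (-t * v ^ 2) *
            ((lam * v ^ (2 * aa) + lam⁻¹ * |v - y| ^ (2 * bb)) / 2) :=
          mul_le_mul_of_nonneg_left hmid (Real.exp_pos _).le
      _ = g v := by rw [hg]; simp only [e0]; ring
  have step1 : (∫ v in Ioi (0:ℝ),
      Real.exp (-t * v ^ 2) * v ^ aa * |v - y| ^ bb) ≤ ∫ v in Ioi (0:ℝ), g v := by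
    apply integral_mono_of_nonneg
    · exact (ae_restrict_iff' measurableSet_Ioi).mpr (ae_of_all _ fun v hv => by
        have hv0 : (0:ℝ) < v := hv
        positivity)
    · exact hgint
    · exact (ae_restrict_iff' measurableSet_Ioi).mpr (ae_of_all _ fun v hv => hmono v hv)
  have step2 : (∫ v in Ioi (0:ℝ), g v) =
      lam / 2 * (∫ v in Ioi (0:ℝ), Real.exp (-t * v ^ 2) * |v - 0| ^ (2 * aa))
      + lam⁻¹ / 2 * (∫ v in Ioi (0:ℝ), Real.exp (-t * v ^ 2) * |v - y| ^ (2 * bb)) := by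
    rw [hg, integral_add (h₁.const_mul _) (h₂.const_mul _), integral_const_mul,
      integral_const_mul]
  have l1 : lam * t ^ (-(2 * aa + 1) / 2) = t ^ (-(1 / 4 : ℝ)) := by
    rw [hlam, ← Real.rpow_add ht]; congr 1; ring
  have l2 : lam⁻¹ * t ^ (-(2 * bb + 1) / 2) = t ^ (-(1 / 4 : ℝ)) := by
    rw [hlam, ← Real.rpow_neg ht.le, ← Real.rpow_add ht]; congr 1; linarith
  calc (∫ v in Ioi (0:ℝ), Real.exp (-t * v ^ 2) * v ^ aa * |v - y| ^ bb)
      ≤ ∫ v in Ioi (0:ℝ), g v := step1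
    _ = lam / 2 * (∫ v in Ioi (0:ℝ), Real.exp (-t * v ^ 2) * |v - 0| ^ (2 * aa))
        + lam⁻¹ / 2 * (∫ v in Ioi (0:ℝ), Real.exp (-t * v ^ 2) * |v - y| ^ (2 * bb)) := step2
    _ ≤ lam / 2 * ((2 / (2 * aa + 1) + Real.sqrt π) * t ^ (-(2 * aa + 1) / 2))
        + lam⁻¹ / 2 * ((2 / (2 * bb + 1) + Real.sqrt π) * t ^ (-(2 * bb + 1) / 2)) := by
      gcongr
      · exact my_key_bound hc1a hc0a.le ht 0
      · exact my_key_bound hc1b hc0b.le ht y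
    _ = (C₁ + C₂) / 2 * t ^ (-(1 / 4 : ℝ)) := by
      rw [show lam / 2 * ((2 / (2 * aa + 1) + Real.sqrt π) * t ^ (-(2 * aa + 1) / 2))
          + lam⁻¹ / 2 * ((2 / (2 * bb + 1) + Real.sqrt π) * t ^ (-(2 * bb + 1) / 2))
          = (2 / (2 * aa + 1) + Real.sqrt π) / 2 * (lam * t ^ (-(2 * aa + 1) / 2))
          + (2 / (2 * bb + 1) + Real.sqrt π) / 2 * (lam⁻¹ * t ^ (-(2 * bb + 1) / 2)) from by
          ring, l1, l2, hC₁, hC₂]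
      ring
end

section
/- For every t > 0, ∬_{Ω} |s − ξ|^{-1/2} e^{-8 t v (u − ξ)} du dv ≤ C t^{-3/4}, where Ω = {s = u + iv : v > 0, u > ξ + v} and C is an absolute constant. -/
open MeasureTheory Real

private lemma dbar_shift_indicator (f : ℝ → ℝ) (ξ : ℝ) :
    (Set.Ioi ξ).indicator (fun u => f (u - ξ)) =
      fun u => (Set.Ioi (0 : ℝ)).indicator f (u - ξ) := by
  ext u
  by_cases h : u ∈ Set.Ioi ξ
  · rw [Set.indicator_of_mem h, Set.indicator_of_mem (by simpa [sub_pos] using h)]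
  · rw [Set.indicator_of_notMem h, Set.indicator_of_notMem (by simpa [sub_pos] using h)]

private lemma dbar_shift_integral (f : ℝ → ℝ) (ξ : ℝ) :
    ∫ u in Set.Ioi ξ, f (u - ξ) = ∫ x in Set.Ioi (0 : ℝ), f x := by
  rw [← integral_indicator measurableSet_Ioi, ← integral_indicator measurableSet_Ioi,
    dbar_shift_indicator f ξ]
  exact integral_sub_right_eq_self ((Set.Ioi (0 : ℝ)).indicator f) ξ

private lemma dbar_shift_integrable {f : ℝ → ℝ} (hf : IntegrableOn f (Set.Ioi 0)) (ξ : ℝ) :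
    IntegrableOn (fun u => f (u - ξ)) (Set.Ioi ξ) := by
  have h : Integrable ((Set.Ioi ξ).indicator (fun u => f (u - ξ))) volume := by
    rw [dbar_shift_indicator f ξ]
    exact Integrable.comp_sub_right ((integrable_indicator_iff measurableSet_Ioi).2 hf) ξ
  exact (integrable_indicator_iff measurableSet_Ioi).1 h

private lemma dbar_integrableOn_aux {a : ℝ} (ha : 0 < a) :
    IntegrableOn (fun x : ℝ => x ^ (-(1 / 2 : ℝ)) * Real.exp (-a * x)) (Set.Ioi 0) := by
  have h := integrableOn_rpow_mul_exp_neg_mul_rpow (p := 1) (s := -(1 / 2 : ℝ))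
    (by norm_num) one_pos ha
  refine h.congr_fun (fun x hx => ?_) measurableSet_Ioi
  simp only [Real.rpow_one]

private lemma dbar_integral_aux {a : ℝ} (ha : 0 < a) :
    ∫ x in Set.Ioi (0 : ℝ), x ^ (-(1 / 2 : ℝ)) * Real.exp (-a * x) =
      (1 / a) ^ (1 / 2 : ℝ) * Real.Gamma (1 / 2) := by
  have h := integral_rpow_mul_exp_neg_mul_Ioi (a := (1 / 2 : ℝ)) (r := a) (by norm_num) ha
  rw [← h]
  refine setIntegral_congr_fun measurableSet_Ioi (fun x hx => ?_)
  norm_num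

/-- `∬_{Ω} |s − ξ|^{-1/2} e^{-8 t v (u − ξ)} du dv ≤ C t^{-3/4}` where
`Ω = {u + iv : v > 0, u > ξ + v}`, with an absolute constant `C`. -/
theorem dbar_singular_double_integral :
    ∃ C : ℝ, 0 < C ∧ ∀ t ξ : ℝ, 0 < t →
      (∫ v in Set.Ioi (0 : ℝ), ∫ u in Set.Ioi (ξ + v),
          ((u - ξ) ^ 2 + v ^ 2) ^ (-(1 / 4 : ℝ)) * Real.exp (-8 * t * v * (u - ξ))) ≤
        C * t ^ (-(3 / 4 : ℝ)) := by
  refine ⟨Real.Gamma (1 / 2) * Real.Gamma (1 / 4), by positivity, fun t ξ ht => ?_⟩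
  have h4t : (0 : ℝ) < 4 * t := by linarith
  set G : ℝ → ℝ := fun v => Real.Gamma (1 / 2) *
      ((1 / (4 * t)) ^ (1 / 2 : ℝ) *
        (v ^ (-(1 / 2 : ℝ)) * Real.exp (-(4 * t) * v ^ (2 : ℝ)))) with hG
  have hGint : IntegrableOn G (Set.Ioi 0) := by
    apply Integrable.const_mul
    apply Integrable.const_mul
    exact integrableOn_rpow_mul_exp_neg_mul_rpow (by norm_num) two_pos h4t
  have key : ∀ v ∈ Set.Ioi (0 : ℝ),
      (∫ u in Set.Ioi (ξ + v),
          ((u - ξ) ^ 2 + v ^ 2) ^ (-(1 / 4 : ℝ)) * Real.exp (-8 * t * v * (u - ξ))) ≤ G v := by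
    intro v hv
    rw [Set.mem_Ioi] at hv
    have hatv : (0 : ℝ) < 4 * t * v := by positivity
    set g : ℝ → ℝ := fun x => x ^ (-(1 / 2 : ℝ)) * Real.exp (-(4 * t * v) * x) with hg
    have hv2 : v ^ (2 : ℝ) = v ^ 2 := by
      rw [← Real.rpow_natCast v 2]; norm_num
    -- pointwise bound on the inner integrand
    have hpt : ∀ u ∈ Set.Ioi (ξ + v),
        ((u - ξ) ^ 2 + v ^ 2) ^ (-(1 / 4 : ℝ)) * Real.exp (-8 * t * v * (u - ξ)) ≤
          Real.exp (-(4 * t) * v ^ (2 : ℝ)) * g (u - ξ) := by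
      intro u hu
      rw [Set.mem_Ioi] at hu
      have hx : 0 < u - ξ := by linarith
      have hvx : v ≤ u - ξ := by linarith
      have hA : ((u - ξ) ^ 2 + v ^ 2) ^ (-(1 / 4 : ℝ)) ≤ (u - ξ) ^ (-(1 / 2 : ℝ)) := by
        have h2 : ((u - ξ) ^ 2) ^ (-(1 / 4 : ℝ)) = (u - ξ) ^ (-(1 / 2 : ℝ)) := by
          rw [← Real.rpow_natCast (u - ξ) 2, ← Real.rpow_mul hx.le]
          norm_num
        calc ((u - ξ) ^ 2 + v ^ 2) ^ (-(1 / 4 : ℝ))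
            ≤ ((u - ξ) ^ 2) ^ (-(1 / 4 : ℝ)) :=
              Real.rpow_le_rpow_of_nonpos (by positivity)
                (by nlinarith [sq_nonneg v]) (by norm_num)
          _ = (u - ξ) ^ (-(1 / 2 : ℝ)) := h2
      have hB : Real.exp (-8 * t * v * (u - ξ)) ≤
          Real.exp (-(4 * t) * v ^ (2 : ℝ)) * Real.exp (-(4 * t * v) * (u - ξ)) := by
        rw [← Real.exp_add, Real.exp_le_exp, hv2]
        nlinarith [mul_le_mul_of_nonneg_left hvx hatv.le]
      calc ((u - ξ) ^ 2 + v ^ 2) ^ (-(1 / 4 : ℝ)) * Real.exp (-8 * t * v * (u - ξ))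
          ≤ (u - ξ) ^ (-(1 / 2 : ℝ)) *
              (Real.exp (-(4 * t) * v ^ (2 : ℝ)) * Real.exp (-(4 * t * v) * (u - ξ))) :=
            mul_le_mul hA hB (Real.exp_nonneg _) (Real.rpow_nonneg hx.le _)
        _ = Real.exp (-(4 * t) * v ^ (2 : ℝ)) * g (u - ξ) := by rw [hg]; ring
    have hgint : IntegrableOn (fun u => g (u - ξ)) (Set.Ioi ξ) :=
      dbar_shift_integrable (dbar_integrableOn_aux hatv) ξ
    have hgnn : 0 ≤ᵐ[volume.restrict (Set.Ioi ξ)] fun u => g (u - ξ) := by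
      refine (ae_restrict_iff' measurableSet_Ioi).2 (ae_of_all _ fun u hu => ?_)
      rw [Set.mem_Ioi] at hu
      have hx : 0 < u - ξ := by linarith
      exact mul_nonneg (Real.rpow_nonneg hx.le _) (Real.exp_nonneg _)
    have step1 : (∫ u in Set.Ioi (ξ + v),
        ((u - ξ) ^ 2 + v ^ 2) ^ (-(1 / 4 : ℝ)) * Real.exp (-8 * t * v * (u - ξ))) ≤
        ∫ u in Set.Ioi (ξ + v), Real.exp (-(4 * t) * v ^ (2 : ℝ)) * g (u - ξ) := by
      refine integral_mono_of_nonneg (ae_of_all _ fun u => ?_)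
        ((hgint.mono_set (Set.Ioi_subset_Ioi (by linarith))).const_mul _)
        ((ae_restrict_iff' measurableSet_Ioi).2 (ae_of_all _ hpt))
      exact mul_nonneg (Real.rpow_nonneg (by positivity) _) (Real.exp_nonneg _)
    have step2 : (∫ u in Set.Ioi (ξ + v), Real.exp (-(4 * t) * v ^ (2 : ℝ)) * g (u - ξ)) =
        Real.exp (-(4 * t) * v ^ (2 : ℝ)) * ∫ u in Set.Ioi (ξ + v), g (u - ξ) :=
      integral_const_mul _ _
    have step3 : (∫ u in Set.Ioi (ξ + v), g (u - ξ)) ≤ ∫ u in Set.Ioi ξ, g (u - ξ) :=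
      setIntegral_mono_set hgint hgnn
        (HasSubset.Subset.eventuallyLE (Set.Ioi_subset_Ioi (by linarith)))
    have step4 : (∫ u in Set.Ioi ξ, g (u - ξ)) =
        (1 / (4 * t * v)) ^ (1 / 2 : ℝ) * Real.Gamma (1 / 2) :=
      (dbar_shift_integral g ξ).trans (dbar_integral_aux hatv)
    have hsplit : (1 / (4 * t * v)) ^ (1 / 2 : ℝ) =
        (1 / (4 * t)) ^ (1 / 2 : ℝ) * v ^ (-(1 / 2 : ℝ)) := by
      rw [show (1 / (4 * t * v) : ℝ) = (1 / (4 * t)) * v⁻¹ by field_simp,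
        Real.mul_rpow (by positivity) (by positivity),
        ← Real.rpow_neg_one v, ← Real.rpow_mul hv.le]
      norm_num
    calc (∫ u in Set.Ioi (ξ + v),
          ((u - ξ) ^ 2 + v ^ 2) ^ (-(1 / 4 : ℝ)) * Real.exp (-8 * t * v * (u - ξ)))
        ≤ Real.exp (-(4 * t) * v ^ (2 : ℝ)) * ∫ u in Set.Ioi (ξ + v), g (u - ξ) := by
          rw [← step2]; exact step1
      _ ≤ Real.exp (-(4 * t) * v ^ (2 : ℝ)) * ∫ u in Set.Ioi ξ, g (u - ξ) :=
          mul_le_mul_of_nonneg_left step3 (Real.exp_nonneg _)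
      _ = G v := by rw [step4, hsplit, hG]; ring
  -- outer integral
  have houter : (∫ v in Set.Ioi (0 : ℝ), ∫ u in Set.Ioi (ξ + v),
      ((u - ξ) ^ 2 + v ^ 2) ^ (-(1 / 4 : ℝ)) * Real.exp (-8 * t * v * (u - ξ))) ≤
      ∫ v in Set.Ioi (0 : ℝ), G v := by
    refine integral_mono_of_nonneg (ae_of_all _ fun v => ?_) hGint
      ((ae_restrict_iff' measurableSet_Ioi).2 (ae_of_all _ key))
    exact integral_nonneg fun u =>
      mul_nonneg (Real.rpow_nonneg (by positivity) _) (Real.exp_nonneg _)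
  have hval : (∫ v in Set.Ioi (0 : ℝ), G v) =
      Real.Gamma (1 / 2) * ((1 / (4 * t)) ^ (1 / 2 : ℝ) *
        ((4 * t) ^ (-(1 / 4 : ℝ)) * (1 / 2) * Real.Gamma (1 / 4))) := by
    rw [hG, integral_const_mul, integral_const_mul,
      integral_rpow_mul_exp_neg_mul_rpow two_pos (by norm_num) h4t]
    norm_num
  refine houter.trans (hval.le.trans ?_)
  have h1 : (1 / (4 * t)) ^ (1 / 2 : ℝ) = (4 * t) ^ (-(1 / 2 : ℝ)) := by
    rw [one_div, ← Real.rpow_neg_one (4 * t), ← Real.rpow_mul h4t.le]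
    norm_num
  have h2 : (4 * t) ^ (-(1 / 2 : ℝ)) * (4 * t) ^ (-(1 / 4 : ℝ)) = (4 * t) ^ (-(3 / 4 : ℝ)) := by
    rw [← Real.rpow_add h4t]; norm_num
  have h3 : (4 * t : ℝ) ^ (-(3 / 4 : ℝ)) = (4 : ℝ) ^ (-(3 / 4 : ℝ)) * t ^ (-(3 / 4 : ℝ)) :=
    Real.mul_rpow (by norm_num) ht.le
  have h4 : ((4 : ℝ)) ^ (-(3 / 4 : ℝ)) ≤ 1 :=
    Real.rpow_le_one_of_one_le_of_nonpos (by norm_num) (by norm_num)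
  have hGpos2 : (0 : ℝ) < Real.Gamma (1 / 2) := by positivity
  have hGpos4 : (0 : ℝ) < Real.Gamma (1 / 4) := by positivity
  have htp : (0 : ℝ) < t ^ (-(3 / 4 : ℝ)) := Real.rpow_pos_of_pos ht _
  calc Real.Gamma (1 / 2) * ((1 / (4 * t)) ^ (1 / 2 : ℝ) *
        ((4 * t) ^ (-(1 / 4 : ℝ)) * (1 / 2) * Real.Gamma (1 / 4)))
      = Real.Gamma (1 / 2) * Real.Gamma (1 / 4) *
          ((1 / 2) * (4 : ℝ) ^ (-(3 / 4 : ℝ))) * t ^ (-(3 / 4 : ℝ)) := by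
        rw [h1]
        linear_combination (Real.Gamma (1 / 2) * Real.Gamma (1 / 4) / 2) * h2 +
          (Real.Gamma (1 / 2) * Real.Gamma (1 / 4) / 2) * h3
    _ ≤ Real.Gamma (1 / 2) * Real.Gamma (1 / 4) * t ^ (-(3 / 4 : ℝ)) := by
        have hc : Real.Gamma (1 / 2) * Real.Gamma (1 / 4) *
            ((1 / 2) * (4 : ℝ) ^ (-(3 / 4 : ℝ))) ≤ Real.Gamma (1 / 2) * Real.Gamma (1 / 4) := by
          nlinarith [Real.rpow_nonneg (by norm_num : (0:ℝ) ≤ 4) (-(3 / 4 : ℝ)),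
            mul_le_mul_of_nonneg_left h4 (le_of_lt (mul_pos hGpos2 hGpos4)),
            mul_pos hGpos2 hGpos4]
        exact mul_le_mul_of_nonneg_right hc htp.le
end
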